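/- Let p ≡ 3 (mod 4) and q ≡ 1 (mod 4) be distinct prime numbers. Then there exists a prime p' with p' ≡ 3 (mod 4) such that (p/p') = -1 and (q/p') = -1. -/

import Mathlib

/-- Kummer's second auxiliary lemma: for distinct primes `p ≡ 3 (mod 4)` and `q ≡ 1 (mod 4)`,
there is a prime `p' ≡ 3 (mod 4)` with `(p/p') = (q/p') = -1`. -/
theorem kummer_lemma_two (p q : ℕ) (hp : p.Prime) (hq : q.Prime) (hne : p ≠ q)
    (hp4 : p % 4 = 3) (hq4 : q % 4 = 1) :
    ∃ p' : ℕ, ∃ hp' : p'.Prime, p' % 4 = 3 ∧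
      @legendreSym p' ⟨hp'⟩ (p : ℤ) = -1 ∧ @legendreSym p' ⟨hp'⟩ (q : ℤ) = -1 := by
  haveI fp : Fact p.Prime := ⟨hp⟩
  haveI fq : Fact q.Prime := ⟨hq⟩
  have hp2 : p ≠ 2 := by intro h; rw [h] at hp4; norm_num at hp4
  have hq2 : q ≠ 2 := by intro h; rw [h] at hq4; norm_num at hq4
  have hpgt : 2 ≤ p := hp.two_le
  have hqgt : 2 ≤ q := hq.two_le
  -- a nonsquare mod q
  obtain ⟨b, hb⟩ := FiniteField.exists_nonsquare (F := ZMod q)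
    (by rw [ZMod.ringChar_zmod_n]; exact hq2)
  have hb0 : b ≠ 0 := fun h => hb (h ▸ ⟨0, by simp⟩)
  -- coprimalities
  have c2p : Nat.Coprime 2 p := (Nat.coprime_primes Nat.prime_two hp).mpr (Ne.symm hp2)
  have c2q : Nat.Coprime 2 q := (Nat.coprime_primes Nat.prime_two hq).mpr (Ne.symm hq2)
  have c4p : Nat.Coprime 4 p := by
    have := Nat.Coprime.pow_left 2 c2p; norm_num at this; exact this
  have c4q : Nat.Coprime 4 q := by
    have := Nat.Coprime.pow_left 2 c2q; norm_num at this; exact this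
  have cpq : Nat.Coprime p q := (Nat.coprime_primes hp hq).mpr hne
  have c4pq : Nat.Coprime (4 * p) q := Nat.Coprime.mul c4q cpq
  -- CRT: find n ≡ 3 [MOD 4], n ≡ 1 [MOD p], n ≡ b.val [MOD q]
  obtain ⟨k, hk1, hk2⟩ := Nat.chineseRemainder c4p 3 1
  obtain ⟨n, hn1, hn2⟩ := Nat.chineseRemainder c4pq k b.val
  have hn4 : n ≡ 3 [MOD 4] := (hn1.of_dvd ⟨p, rfl⟩).trans hk1
  have hnp : n ≡ 1 [MOD p] := (hn1.of_dvd ⟨4, by ring⟩).trans hk2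
  have hnq : n ≡ b.val [MOD q] := hn2
  -- n is coprime to 4*p*q
  have hNpos : 0 < 4 * p * q := by positivity
  haveI : NeZero (4 * p * q) := ⟨hNpos.ne'⟩
  have cn2 : Nat.Coprime n 2 := by
    have h := hn4; unfold Nat.ModEq at h
    rw [Nat.coprime_comm, Nat.Prime.coprime_iff_not_dvd Nat.prime_two, Nat.dvd_iff_mod_eq_zero]
    omega
  have cn4 : Nat.Coprime n 4 := by
    have := cn2.pow_right 2; norm_num at this; exact this
  have cnp : Nat.Coprime n p := by
    rw [Nat.coprime_comm, hp.coprime_iff_not_dvd]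
    rintro ⟨c, rfl⟩
    have h := hnp; unfold Nat.ModEq at h
    rw [Nat.mul_mod_right, Nat.mod_eq_of_lt (by omega)] at h
    exact one_ne_zero h.symm
  have cnq : Nat.Coprime n q := by
    rw [Nat.coprime_comm, hq.coprime_iff_not_dvd]
    rintro ⟨c, rfl⟩
    have h := hnq; unfold Nat.ModEq at h
    rw [Nat.mul_mod_right, Nat.mod_eq_of_lt (ZMod.val_lt b)] at h
    exact hb0 (by rw [← ZMod.val_eq_zero, ← h])
  have cnN : Nat.Coprime n (4 * p * q) := Nat.Coprime.mul_right (cn4.mul_right cnp) cnq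
  -- Dirichlet
  obtain ⟨p', -, hp'p, hcast⟩ := Nat.forall_exists_prime_gt_and_eq_mod
    ((ZMod.isUnit_iff_coprime n (4 * p * q)).mpr cnN) 0
  have hmod : p' ≡ n [MOD 4 * p * q] := (ZMod.natCast_eq_natCast_iff _ _ _).mp hcast
  have h4 : p' ≡ 3 [MOD 4] := (hmod.of_dvd ⟨p * q, by ring⟩).trans hn4
  have hpm : p' ≡ 1 [MOD p] := (hmod.of_dvd ⟨4 * q, by ring⟩).trans hnp
  have hqm : p' ≡ b.val [MOD q] := (hmod.of_dvd ⟨4 * p, by ring⟩).trans hnq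
  have hp'4 : p' % 4 = 3 := by have := h4; unfold Nat.ModEq at this; omega
  have hp'2 : p' ≠ 2 := by intro h; rw [h] at hp'4; norm_num at hp'4
  haveI fp' : Fact p'.Prime := ⟨hp'p⟩
  refine ⟨p', hp'p, hp'4, ?_, ?_⟩
  · -- (p/p') = -1
    rw [legendreSym.quadratic_reciprocity_three_mod_four hp4 hp'4, neg_eq_iff_eq_neg, neg_neg]
    have hc : ((p' : ℕ) : ZMod p) = 1 := by
      have := (ZMod.natCast_eq_natCast_iff p' 1 p).mpr hpm
      simpa using this
    rw [legendreSym.eq_one_iff]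
    · push_cast
      rw [hc]
      exact IsSquare.one
    · push_cast
      rw [hc]
      exact one_ne_zero
  · -- (q/p') = -1
    rw [legendreSym.quadratic_reciprocity_one_mod_four hq4 hp'2,
      legendreSym.eq_neg_one_iff]
    have hc : ((p' : ℕ) : ZMod q) = b := by
      have := (ZMod.natCast_eq_natCast_iff p' b.val q).mpr hqm
      simpa [ZMod.natCast_val, ZMod.cast_id] using this
    push_cast
    rw [hc]
    exact hb
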